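/- There exists a unique real number λ₀ such that ξ(λ₀) = 0, where ξ(λ) = ∫_{x₀}^{x₁} (q(x)/g(x))·exp(−∫_{x₀}^x (λ + w(s))/g(s) ds) dx − 1, provided ∫_{x₀}^{x₁} q > 0. -/

import Mathlib

open MeasureTheory Set
open Filter Topology

/-- Interval integrability of a measurable function bounded on the interval. -/
lemma auxIntInt {x₀ x₁ C : ℝ} (h01 : x₀ ≤ x₁) {f : ℝ → ℝ}
    (hm : Measurable f) (hb : ∀ x ∈ Ioc x₀ x₁, ‖f x‖ ≤ C) :
    IntervalIntegrable f volume x₀ x₁ := by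
  rw [intervalIntegrable_iff_integrableOn_Ioc_of_le h01]
  haveI : IsFiniteMeasure (volume.restrict (Ioc x₀ x₁)) :=
    ⟨by rw [Measure.restrict_apply_univ]; exact measure_Ioc_lt_top⟩
  exact ⟨hm.aestronglyMeasurable,
    HasFiniteIntegral.of_bounded ((ae_restrict_iff' measurableSet_Ioc).2 (ae_of_all _ hb))⟩

/-- The characteristic function restricted to real `λ`. -/
noncomputable def xiR (x₀ x₁ : ℝ) (g w q : ℝ → ℝ) (l : ℝ) : ℝ :=
  (∫ x in x₀..x₁, q x / g x * Real.exp (-∫ s in x₀..x, (l + w s) / g s)) - 1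

set_option maxHeartbeats 1600000 in
/-- There is a unique real `λ₀` with `ξ(λ₀) = 0`. -/
theorem stmt_11 (x₀ x₁ Mq : ℝ) (hx₀ : 0 < x₀) (hx : x₀ < x₁)
    (g w q : ℝ → ℝ)
    (hg : ContDiffOn ℝ 1 g (Icc x₀ x₁)) (hgpos : ∀ x ∈ Icc x₀ x₁, 0 < g x)
    (hw : ContinuousOn w (Icc x₀ x₁)) (hw0 : ∀ x ∈ Icc x₀ x₁, 0 ≤ w x)
    (hqm : Measurable q) (hqb : ∀ x ∈ Icc x₀ x₁, |q x| ≤ Mq)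
    (hq0 : ∀ᵐ x ∂(volume.restrict (Icc x₀ x₁)), 0 ≤ q x)
    (hqpos : 0 < ∫ x in x₀..x₁, q x) :
    ∃! l₀ : ℝ, xiR x₀ x₁ g w q l₀ = 0 := by
  have hle : x₀ ≤ x₁ := hx.le
  have hMq0 : 0 ≤ Mq := le_trans (abs_nonneg _) (hqb x₀ ⟨le_rfl, hle⟩)
  -- the projection onto the interval
  set p : ℝ → ℝ := fun x => max x₀ (min x x₁) with hpdef
  have hpmem : ∀ x, p x ∈ Icc x₀ x₁ := fun x =>
    ⟨le_max_left _ _, max_le hle (min_le_right _ _)⟩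
  have hpid : ∀ x ∈ Icc x₀ x₁, p x = x := by
    intro x hxm
    simp only [hpdef]
    rw [min_eq_left hxm.2, max_eq_right hxm.1]
  have hpcont : Continuous p := continuous_const.max (continuous_id.min continuous_const)
  have hgc : ContinuousOn g (Icc x₀ x₁) := hg.continuousOn
  -- min and max of g
  obtain ⟨am, hamS, ham'⟩ :=
    isCompact_Icc.exists_isMinOn ⟨x₀, left_mem_Icc.2 hle⟩ hgc
  obtain ⟨aM, haMS, haM'⟩ :=
    isCompact_Icc.exists_isMaxOn ⟨x₀, left_mem_Icc.2 hle⟩ hgc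
  have ham : ∀ y ∈ Icc x₀ x₁, g am ≤ g y := fun y hy => ham' hy
  have haM : ∀ y ∈ Icc x₀ x₁, g y ≤ g aM := fun y hy => haM' hy
  set gm := g am with hgmdef
  set gM := g aM with hgMdef
  have hgm : 0 < gm := hgpos am hamS
  have hgM : 0 < gM := hgpos aM haMS
  -- the extended coefficient functions
  set G : ℝ → ℝ := fun x => 1 / g (p x) with hGdef
  set Wc : ℝ → ℝ := fun x => w (p x) / g (p x) with hWcdef
  have hGcont : Continuous G := by
    apply Continuous.div continuous_const (hgc.comp_continuous hpcont hpmem)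
    intro x; exact (hgpos _ (hpmem x)).ne'
  have hWccont : Continuous Wc := by
    apply Continuous.div (hw.comp_continuous hpcont hpmem)
      (hgc.comp_continuous hpcont hpmem)
    intro x; exact (hgpos _ (hpmem x)).ne'
  have hGpos : ∀ x, 0 < G x := fun x => one_div_pos.2 (hgpos _ (hpmem x))
  have hGle : ∀ x, G x ≤ 1 / gm := fun x =>
    one_div_le_one_div_of_le hgm (ham _ (hpmem x))
  have hGge : ∀ x, 1 / gM ≤ G x := fun x =>
    one_div_le_one_div_of_le (hgpos _ (hpmem x)) (haM _ (hpmem x))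
  have hWc0 : ∀ x, 0 ≤ Wc x := fun x =>
    div_nonneg (hw0 _ (hpmem x)) (hgpos _ (hpmem x)).le
  -- the primitives
  set F : ℝ → ℝ := fun x => ∫ s in x₀..x, G s with hFdef
  set W : ℝ → ℝ := fun x => ∫ s in x₀..x, Wc s with hWdef
  have hGint : ∀ a b : ℝ, IntervalIntegrable G volume a b := fun a b =>
    hGcont.intervalIntegrable a b
  have hWcint : ∀ a b : ℝ, IntervalIntegrable Wc volume a b := fun a b =>
    hWccont.intervalIntegrable a b
  have hFcont : Continuous F :=
    intervalIntegral.continuous_primitive hGint x₀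
  have hFdiff : ∀ u v : ℝ, F v - F u = ∫ s in u..v, G s := by
    intro u v
    have := intervalIntegral.integral_add_adjacent_intervals (hGint x₀ u) (hGint u v)
    simp only [hFdef]
    linarith
  have hWdiff : ∀ u v : ℝ, W v - W u = ∫ s in u..v, Wc s := by
    intro u v
    have := intervalIntegral.integral_add_adjacent_intervals (hWcint x₀ u) (hWcint u v)
    simp only [hWdef]
    linarith
  have hFlow : ∀ u v : ℝ, u ≤ v → (v - u) / gM ≤ F v - F u := by
    intro u v huv
    rw [hFdiff u v]
    calc (v - u) / gM = ∫ _ in u..v, 1 / gM := by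
          rw [intervalIntegral.integral_const]; rw [smul_eq_mul]; ring
      _ ≤ ∫ s in u..v, G s :=
          intervalIntegral.integral_mono_on huv intervalIntegrable_const
            (hGcont.intervalIntegrable u v) (fun s _ => hGge s)
  have hFmono : ∀ u v : ℝ, u ≤ v → F u ≤ F v := by
    intro u v huv
    have h1 := hFlow u v huv
    have h2 : 0 ≤ (v - u) / gM := div_nonneg (by linarith) hgM.le
    linarith
  have hF0 : F x₀ = 0 := by simp [hFdef]
  have hFnonneg : ∀ x, x₀ ≤ x → 0 ≤ F x := by
    intro x hxm; have := hFmono x₀ x hxm; rw [hF0] at this; exact this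
  have hFpos : ∀ x, x₀ < x → 0 < F x := by
    intro x hxm
    have h1 := hFlow x₀ x hxm.le
    rw [hF0] at h1
    have h2 : 0 < (x - x₀) / gM := div_pos (by linarith) hgM
    linarith
  have hWmono : ∀ u v : ℝ, u ≤ v → W u ≤ W v := by
    intro u v huv
    have : 0 ≤ ∫ s in u..v, Wc s :=
      intervalIntegral.integral_nonneg huv (fun s _ => hWc0 s)
    have h2 := hWdiff u v
    linarith
  have hW0 : W x₀ = 0 := by simp [hWdef]
  have hWnonneg : ∀ x, x₀ ≤ x → 0 ≤ W x := by
    intro x hxm; have := hWmono x₀ x hxm; rw [hW0] at this; exact this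
  -- the reduced integrand
  set h : ℝ → ℝ := fun x => q x * (G x * Real.exp (-W x)) with hhdef
  set φ : ℝ → ℝ → ℝ := fun l x => h x * Real.exp (-(l * F x)) with hφdef
  have hGWpos : ∀ x, 0 < G x * Real.exp (-W x) := fun x =>
    mul_pos (hGpos x) (Real.exp_pos _)
  have hh0all : ∀ x, 0 ≤ q x → 0 ≤ h x := fun x hqx => by
    simp only [hhdef]; exact mul_nonneg hqx (hGWpos x).le
  have hMgm : 0 ≤ Mq / gm := div_nonneg hMq0 hgm.le
  have hWcont : Continuous W :=
    intervalIntegral.continuous_primitive (fun a b => hWccont.intervalIntegrable a b) x₀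
  have hhmeas : Measurable h :=
    hqm.mul ((hGcont.mul (Real.continuous_exp.comp hWcont.neg)).measurable)
  have hφmeas : ∀ l, Measurable (φ l) := fun l =>
    hhmeas.mul ((Real.continuous_exp.comp ((continuous_const.mul hFcont).neg)).measurable)
  -- bound on h
  have hhb : ∀ x ∈ Icc x₀ x₁, |h x| ≤ Mq / gm := by
    intro x hxm
    have h1 : Real.exp (-W x) ≤ 1 := Real.exp_le_one_iff.2 (by linarith [hWnonneg x hxm.1])
    have h2 : 0 < Real.exp (-W x) := Real.exp_pos _
    have h3 : 0 < G x := hGpos x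
    have h4 : |h x| = |q x| * (G x * Real.exp (-W x)) := by
      simp only [hhdef]
      rw [abs_mul, abs_of_pos (hGWpos x)]
    rw [h4]
    have h5 : |q x| ≤ Mq := hqb x hxm
    have h6 : G x * Real.exp (-W x) ≤ 1 / gm * 1 :=
      mul_le_mul (hGle x) h1 h2.le (one_div_pos.2 hgm).le
    calc |q x| * (G x * Real.exp (-W x)) ≤ Mq * (1 / gm * 1) :=
          mul_le_mul h5 h6 (hGWpos x).le hMq0
      _ = Mq / gm := by ring
  -- bound on φ
  have hφb : ∀ l : ℝ, ∀ x ∈ Icc x₀ x₁, |φ l x| ≤ Mq / gm * Real.exp (|l| * F x₁) := by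
    intro l x hxm
    have hFx0 : 0 ≤ F x := hFnonneg x hxm.1
    have hFx1 : F x ≤ F x₁ := hFmono x x₁ hxm.2
    have h1 : -(l * F x) ≤ |l| * F x₁ := by
      have : -(l * F x) ≤ |l * F x| := neg_le_abs _
      rw [abs_mul, abs_of_nonneg hFx0] at this
      have h2 : |l| * F x ≤ |l| * F x₁ := mul_le_mul_of_nonneg_left hFx1 (abs_nonneg l)
      linarith
    have h2 : Real.exp (-(l * F x)) ≤ Real.exp (|l| * F x₁) := Real.exp_le_exp.2 h1
    calc |φ l x| = |h x| * Real.exp (-(l * F x)) := by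
          simp only [hφdef]; rw [abs_mul, abs_of_pos (Real.exp_pos _)]
      _ ≤ Mq / gm * Real.exp (|l| * F x₁) :=
          mul_le_mul (hhb x hxm) h2 (Real.exp_pos _).le hMgm
  -- interval integrability
  have hhint : IntervalIntegrable h volume x₀ x₁ :=
    auxIntInt hle hhmeas (fun x hxm => hhb x (Ioc_subset_Icc_self hxm))
  have hφint : ∀ l, IntervalIntegrable (φ l) volume x₀ x₁ := fun l =>
    auxIntInt hle (hφmeas l) (fun x hxm => hφb l x (Ioc_subset_Icc_self hxm))
  -- rewriting xiR
  have hxi : ∀ l, xiR x₀ x₁ g w q l = (∫ x in x₀..x₁, φ l x) - 1 := by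
    intro l
    unfold xiR
    congr 1
    apply intervalIntegral.integral_congr
    intro x hxm
    rw [uIcc_of_le hle] at hxm
    dsimp only
    have h1 : (∫ s in x₀..x, (l + w s) / g s) = l * F x + W x := by
      have e1 : EqOn (fun s => (l + w s) / g s) (fun s => l * G s + Wc s) (uIcc x₀ x) := by
        intro s hs
        rw [uIcc_of_le hxm.1] at hs
        have hsS : s ∈ Icc x₀ x₁ := ⟨hs.1, hs.2.trans hxm.2⟩
        simp only [hGdef, hWcdef, hpid s hsS]
        rw [add_div, mul_one_div]
      rw [intervalIntegral.integral_congr e1,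
        intervalIntegral.integral_add ((hGcont.intervalIntegrable x₀ x).const_mul l)
          (hWccont.intervalIntegrable x₀ x),
        intervalIntegral.integral_const_mul]
    rw [h1]
    simp only [hφdef, hhdef, hGdef, hpid x hxm]
    rw [neg_add, Real.exp_add]
    ring
  -- positivity of the integral of h
  set c : ℝ := 1 / gM * Real.exp (-W x₁) with hcdef
  have hc : 0 < c := mul_pos (one_div_pos.2 hgM) (Real.exp_pos _)
  have hIpos : 0 < ∫ x in x₀..x₁, h x := by
    have hcq : IntervalIntegrable (fun x => c * q x) volume x₀ x₁ := by
      apply auxIntInt hle (hqm.const_mul c)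
      intro x hxm
      calc ‖c * q x‖ = c * |q x| := by rw [norm_mul, Real.norm_eq_abs, abs_of_pos hc,
            Real.norm_eq_abs]
        _ ≤ c * Mq := mul_le_mul_of_nonneg_left (hqb x (Ioc_subset_Icc_self hxm)) hc.le
    have hmono : (∫ x in x₀..x₁, c * q x) ≤ ∫ x in x₀..x₁, h x := by
      apply intervalIntegral.integral_mono_ae_restrict hle hcq hhint
      filter_upwards [hq0, ae_restrict_mem measurableSet_Icc] with x hqx hxm
      have h1 : c ≤ G x * Real.exp (-W x) := by
        apply mul_le_mul (hGge x) (Real.exp_le_exp.2 (by linarith [hWmono x x₁ hxm.2]))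
          (Real.exp_pos _).le (hGpos x).le
      calc c * q x ≤ (G x * Real.exp (-W x)) * q x := mul_le_mul_of_nonneg_right h1 hqx
        _ = h x := by rw [hhdef]; ring
    rw [intervalIntegral.integral_const_mul] at hmono
    nlinarith [mul_pos hc hqpos]
  -- strict antitonicity of the integral
  have hkey : ∀ a b : ℝ, a < b → (∫ x in x₀..x₁, φ b x) < ∫ x in x₀..x₁, φ a x := by
    intro a b hab
    have hle' : (∫ x in x₀..x₁, φ b x) ≤ ∫ x in x₀..x₁, φ a x := by
      apply intervalIntegral.integral_mono_ae_restrict hle (hφint b) (hφint a)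
      filter_upwards [hq0, ae_restrict_mem measurableSet_Icc] with x hqx hxm
      have hh0 : 0 ≤ h x := hh0all x hqx
      have : Real.exp (-(b * F x)) ≤ Real.exp (-(a * F x)) := by
        apply Real.exp_le_exp.2
        have : 0 ≤ F x := hFnonneg x hxm.1
        nlinarith
      simp only [hφdef]
      exact mul_le_mul_of_nonneg_left this hh0
    rcases hle'.lt_or_eq with hlt | heq
    · exact hlt
    exfalso
    have hzero : (∫ x in x₀..x₁, (φ a x - φ b x)) = 0 := by
      rw [intervalIntegral.integral_sub (hφint a) (hφint b)]; linarith
    have h0ae : 0 ≤ᵐ[volume.restrict (Ioc x₀ x₁)] fun x => φ a x - φ b x := by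
      have hq0' : ∀ᵐ x ∂(volume.restrict (Ioc x₀ x₁)), 0 ≤ q x :=
        ae_restrict_of_ae_restrict_of_subset Ioc_subset_Icc_self hq0
      filter_upwards [hq0', ae_restrict_mem measurableSet_Ioc] with x hqx hxm
      have hh0 : 0 ≤ h x := hh0all x hqx
      have hex : Real.exp (-(b * F x)) ≤ Real.exp (-(a * F x)) := by
        apply Real.exp_le_exp.2
        have : 0 ≤ F x := hFnonneg x hxm.1.le
        nlinarith
      simp only [Pi.zero_apply, hφdef]
      have h9 := mul_le_mul_of_nonneg_left hex hh0
      linarith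
    have hz := (intervalIntegral.integral_eq_zero_iff_of_le_of_nonneg_ae hle h0ae
      ((hφint a).sub (hφint b))).1 hzero
    have hh0' : h =ᵐ[volume.restrict (Ioc x₀ x₁)] 0 := by
      filter_upwards [hz, ae_restrict_mem measurableSet_Ioc] with x hxz hxm
      have hFp : 0 < F x := hFpos x hxm.1
      have hexp : Real.exp (-(b * F x)) < Real.exp (-(a * F x)) := by
        apply Real.exp_lt_exp.2
        nlinarith
      have : φ a x - φ b x = h x * (Real.exp (-(a * F x)) - Real.exp (-(b * F x))) := by
        simp only [hφdef]; ring
      rw [this] at hxz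
      have := mul_eq_zero.1 hxz
      rcases this with h' | h'
      · exact h'
      · exfalso; exact (sub_ne_zero.2 hexp.ne') h'
    have : (∫ x in x₀..x₁, h x) = 0 := by
      rw [intervalIntegral.integral_of_le hle]
      exact integral_eq_zero_of_ae hh0'
    linarith
  -- continuity
  have hcont : Continuous fun l => ∫ x in x₀..x₁, φ l x := by
    rw [continuous_iff_continuousAt]
    intro l
    apply intervalIntegral.continuousAt_of_dominated_interval
      (bound := fun _ => Mq / gm * Real.exp ((|l| + 1) * F x₁))
    · exact Eventually.of_forall fun m => (hφmeas m).aestronglyMeasurable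
    · filter_upwards [Metric.ball_mem_nhds l one_pos] with m hm
      apply ae_of_all
      intro t ht
      rw [uIoc_of_le hle] at ht
      have htI : t ∈ Icc x₀ x₁ := Ioc_subset_Icc_self ht
      have h1 : |m| ≤ |l| + 1 := by
        have := abs_sub_abs_le_abs_sub m l
        have h2 : |m - l| < 1 := by
          rw [← Real.dist_eq]; exact Metric.mem_ball.1 hm
        linarith
      have h2 : Real.exp (|m| * F x₁) ≤ Real.exp ((|l| + 1) * F x₁) :=
        Real.exp_le_exp.2 (mul_le_mul_of_nonneg_right h1 (hFnonneg x₁ hle))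
      calc ‖φ m t‖ = |φ m t| := rfl
        _ ≤ Mq / gm * Real.exp (|m| * F x₁) := hφb m t htI
        _ ≤ Mq / gm * Real.exp ((|l| + 1) * F x₁) :=
            mul_le_mul_of_nonneg_left h2 hMgm
    · exact intervalIntegrable_const
    · apply ae_of_all
      intro t _
      apply Continuous.continuousAt
      exact continuous_const.mul (Real.continuous_exp.comp
        ((continuous_id.mul continuous_const).neg))
  -- the integral tends to 0 along natural λ
  have hT : Tendsto (fun n : ℕ => ∫ x in x₀..x₁, φ n x) atTop (𝓝 (∫ x in x₀..x₁, (0:ℝ))) := by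
    apply intervalIntegral.tendsto_integral_filter_of_dominated_convergence
      (bound := fun _ => Mq / gm)
    · exact Eventually.of_forall fun n => (hφmeas n).aestronglyMeasurable
    · apply Eventually.of_forall
      intro n
      apply ae_of_all
      intro t ht
      rw [uIoc_of_le hle] at ht
      have htI : t ∈ Icc x₀ x₁ := Ioc_subset_Icc_self ht
      have h1 : Real.exp (-((n : ℝ) * F t)) ≤ 1 := by
        apply Real.exp_le_one_iff.2
        have h2 : (0:ℝ) ≤ (n : ℝ) * F t :=
          mul_nonneg (Nat.cast_nonneg n) (hFnonneg t htI.1)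
        linarith
      calc ‖φ n t‖ = |h t| * Real.exp (-((n:ℝ) * F t)) := by
            simp only [hφdef]; rw [Real.norm_eq_abs, abs_mul, abs_of_pos (Real.exp_pos _)]
        _ ≤ Mq / gm * 1 := mul_le_mul (hhb t htI) h1 (Real.exp_pos _).le hMgm
        _ = Mq / gm := mul_one _
    · exact intervalIntegrable_const
    · apply ae_of_all
      intro t ht
      rw [uIoc_of_le hle] at ht
      have hFp : 0 < F t := hFpos t ht.1
      have h1 : Tendsto (fun n : ℕ => Real.exp (-((n:ℝ) * F t))) atTop (𝓝 0) := by
        have he : ∀ n : ℕ, Real.exp (-((n:ℝ) * F t)) = Real.exp (-F t) ^ n := by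
          intro n
          rw [← Real.exp_nat_mul]
          ring_nf
        simp only [he]
        apply tendsto_pow_atTop_nhds_zero_of_lt_one (Real.exp_pos _).le
        rw [Real.exp_lt_one_iff]
        linarith
      have := h1.const_mul (h t)
      rw [mul_zero] at this
      simpa only [hφdef] using this
  simp only [intervalIntegral.integral_zero] at hT
  -- pick b with integral < 1
  obtain ⟨nb, hnb⟩ := (hT.eventually (eventually_lt_nhds (show (0:ℝ) < 1 by norm_num))).exists
  -- pick the intermediate point δ
  set Ih : ℝ := ∫ x in x₀..x₁, h x with hIdef
  set Cb : ℝ := Mq / gm + 1 with hCdef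
  have hCb : 0 < Cb := by simp only [hCdef]; linarith
  set δ : ℝ := x₀ + min ((x₁ - x₀) / 2) (Ih / (2 * Cb)) with hδdef
  have hδ1 : x₀ < δ := by
    simp only [hδdef]
    have h1 : 0 < (x₁ - x₀) / 2 := by linarith
    have h2 : 0 < Ih / (2 * Cb) := div_pos hIpos (by linarith)
    have := lt_min h1 h2
    linarith
  have hδ2 : δ < x₁ := by
    simp only [hδdef]
    have := min_le_left ((x₁ - x₀) / 2) (Ih / (2 * Cb))
    linarith
  have hsub1 : IntervalIntegrable h volume x₀ δ :=
    hhint.mono_set (by rw [uIcc_of_le hδ1.le, uIcc_of_le hle]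
                       exact Icc_subset_Icc le_rfl hδ2.le)
  have hsub2 : IntervalIntegrable h volume δ x₁ :=
    hhint.mono_set (by rw [uIcc_of_le hδ2.le, uIcc_of_le hle]
                       exact Icc_subset_Icc hδ1.le le_rfl)
  have hsplit : (∫ x in x₀..δ, h x) + (∫ x in δ..x₁, h x) = Ih :=
    intervalIntegral.integral_add_adjacent_intervals hsub1 hsub2
  have hsmall : |∫ x in x₀..δ, h x| ≤ Ih / 2 := by
    have h1 : ∀ x ∈ Set.uIoc x₀ δ, ‖h x‖ ≤ Cb := by
      intro x hxm
      rw [uIoc_of_le hδ1.le] at hxm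
      have : x ∈ Icc x₀ x₁ := ⟨hxm.1.le, hxm.2.trans hδ2.le⟩
      have := hhb x this
      simp only [hCdef, Real.norm_eq_abs]
      linarith
    have h2 := intervalIntegral.norm_integral_le_of_norm_le_const h1
    rw [Real.norm_eq_abs] at h2
    have h3 : |δ - x₀| = δ - x₀ := abs_of_pos (by linarith)
    rw [h3] at h2
    have h4 : δ - x₀ ≤ Ih / (2 * Cb) := by
      simp only [hδdef]
      have := min_le_right ((x₁ - x₀) / 2) (Ih / (2 * Cb))
      linarith
    have h5 : Cb * (δ - x₀) ≤ Cb * (Ih / (2 * Cb)) := mul_le_mul_of_nonneg_left h4 hCb.le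
    have h6 : Cb * (Ih / (2 * Cb)) = Ih / 2 := by field_simp
    have h7 : Cb * (δ - x₀) ≤ Ih / 2 := by rw [← h6]; exact h5
    exact h2.trans h7
  have hJpos : 0 < ∫ x in δ..x₁, h x := by
    have := abs_le.1 hsmall
    have h7 : (∫ x in x₀..δ, h x) ≤ Ih / 2 := this.2
    linarith
  set J : ℝ := ∫ x in δ..x₁, h x with hJdef
  have hFδ : 0 < F δ := hFpos δ hδ1
  -- pick a ≤ 0 with J * exp(-(a * F δ)) ≥ 2
  have ht1 : Tendsto (fun a : ℝ => -(a * F δ)) atBot atTop := by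
    have h1 : Tendsto (fun a : ℝ => a * F δ) atBot atBot :=
      Tendsto.atBot_mul_const hFδ tendsto_id
    exact tendsto_neg_atBot_atTop.comp h1
  have ht2 : Tendsto (fun a : ℝ => J * Real.exp (-(a * F δ))) atBot atTop :=
    (Real.tendsto_exp_atTop.comp ht1).const_mul_atTop hJpos
  obtain ⟨a, ha2, ha0⟩ := ((ht2.eventually_ge_atTop 2).and (eventually_le_atBot 0)).exists
  -- the lower bound at a
  have hlower : 2 ≤ ∫ x in x₀..x₁, φ a x := by
    have hsubφ1 : IntervalIntegrable (φ a) volume x₀ δ :=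
      (hφint a).mono_set (by rw [uIcc_of_le hδ1.le, uIcc_of_le hle]
                             exact Icc_subset_Icc le_rfl hδ2.le)
    have hsubφ2 : IntervalIntegrable (φ a) volume δ x₁ :=
      (hφint a).mono_set (by rw [uIcc_of_le hδ2.le, uIcc_of_le hle]
                             exact Icc_subset_Icc hδ1.le le_rfl)
    have hsplitφ : (∫ x in x₀..δ, φ a x) + (∫ x in δ..x₁, φ a x) = ∫ x in x₀..x₁, φ a x :=
      intervalIntegral.integral_add_adjacent_intervals hsubφ1 hsubφ2
    have hpos1 : 0 ≤ ∫ x in x₀..δ, φ a x := by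
      apply intervalIntegral.integral_nonneg_of_ae_restrict hδ1.le
      have hq0' : ∀ᵐ x ∂(volume.restrict (Icc x₀ δ)), 0 ≤ q x :=
        ae_restrict_of_ae_restrict_of_subset (Icc_subset_Icc le_rfl hδ2.le) hq0
      filter_upwards [hq0'] with x hqx
      simp only [hφdef]
      exact mul_nonneg (hh0all x hqx) (Real.exp_pos _).le
    have hpos2 : J * Real.exp (-(a * F δ)) ≤ ∫ x in δ..x₁, φ a x := by
      have hconst : IntervalIntegrable (fun x => h x * Real.exp (-(a * F δ))) volume δ x₁ :=
        hsub2.mul_const _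
      have hmono2 : (∫ x in δ..x₁, h x * Real.exp (-(a * F δ))) ≤ ∫ x in δ..x₁, φ a x := by
        apply intervalIntegral.integral_mono_ae_restrict hδ2.le hconst hsubφ2
        have hq0' : ∀ᵐ x ∂(volume.restrict (Icc δ x₁)), 0 ≤ q x :=
          ae_restrict_of_ae_restrict_of_subset (Icc_subset_Icc hδ1.le le_rfl) hq0
        filter_upwards [hq0', ae_restrict_mem measurableSet_Icc] with x hqx hxm
        have hh0 : 0 ≤ h x := hh0all x hqx
        have hFmx : F δ ≤ F x := hFmono δ x hxm.1
        have : Real.exp (-(a * F δ)) ≤ Real.exp (-(a * F x)) := by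
          apply Real.exp_le_exp.2
          nlinarith
        simp only [hφdef]
        exact mul_le_mul_of_nonneg_left this hh0
      rw [intervalIntegral.integral_mul_const] at hmono2
      calc J * Real.exp (-(a * F δ)) = (∫ x in δ..x₁, h x) * Real.exp (-(a * F δ)) := by
            rw [hJdef]
        _ ≤ ∫ x in δ..x₁, φ a x := hmono2
    linarith
  -- assemble: a ≤ nb
  have hΞa : 0 < (∫ x in x₀..x₁, φ a x) - 1 := by linarith
  have hΞb : (∫ x in x₀..x₁, φ (nb : ℝ) x) - 1 < 0 := by linarith
  have hab : a ≤ (nb : ℝ) := by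
    by_contra hcon
    push_neg at hcon
    have := hkey _ _ hcon
    linarith
  -- IVT
  have hcont' : ContinuousOn (fun l => (∫ x in x₀..x₁, φ l x) - 1) (Icc a (nb : ℝ)) :=
    (hcont.sub continuous_const).continuousOn
  have hivt := intermediate_value_Icc' hab hcont'
  have h0mem : (0:ℝ) ∈ Icc ((∫ x in x₀..x₁, φ (nb:ℝ) x) - 1) ((∫ x in x₀..x₁, φ a x) - 1) :=
    ⟨hΞb.le, hΞa.le⟩
  obtain ⟨l₀, _, hl₀⟩ := hivt h0mem
  have hl₀' : (∫ x in x₀..x₁, φ l₀ x) - 1 = 0 := hl₀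
  refine ⟨l₀, ?_, ?_⟩
  · show xiR x₀ x₁ g w q l₀ = 0
    rw [hxi]; exact hl₀'
  · intro y hy
    have hy' : xiR x₀ x₁ g w q y = 0 := hy
    rw [hxi] at hy'
    by_contra hne
    rcases lt_or_gt_of_ne hne with hlt | hgt
    · have := hkey y l₀ hlt
      linarith
    · have := hkey l₀ y hgt
      linarith
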